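/- arXiv:2205.05164 — 12 statements merged into one kernel-verified Lean document; each statement's English description precedes it below -/
import Mathlib

section
/- If A is a normal bounded operator on a complex Hilbert space H, then for every λ ∈ (0,1) and all x, y ∈ H, one has |⟨Ax, y⟩| ≤ (‖Ax‖‖y‖)^λ (‖Ay‖‖x‖)^(1−λ). -/
open ContinuousLinearMap Set

theorem gcsi_of_normal {H : Type*} [NormedAddCommGroup H] [InnerProductSpace ℂ H]
    [CompleteSpace H] (A : H →L[ℂ] H) (hA : A * adjoint A = adjoint A * A) :
    ∀ lam ∈ Set.Ioo (0 : ℝ) 1, ∀ x y : H,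
      ‖(inner ℂ (A x) y : ℂ)‖ ≤ (‖A x‖ * ‖y‖) ^ lam * (‖A y‖ * ‖x‖) ^ (1 - lam) := by
  rintro lam ⟨hl0, hl1⟩ x y
  -- norm of adjoint equals norm of A on each vector
  have hadj : ∀ z : H, ‖adjoint A z‖ = ‖A z‖ := by
    intro z
    have h1 : (inner ℂ (adjoint A z) (adjoint A z) : ℂ) = inner ℂ (A z) (A z) := by
      rw [adjoint_inner_left]
      have : A (adjoint A z) = (A * adjoint A) z := rfl
      rw [this, hA]
      have : (adjoint A * A) z = adjoint A (A z) := rfl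
      rw [this, adjoint_inner_right]
    have h2 : ‖adjoint A z‖ ^ 2 = ‖A z‖ ^ 2 := by
      rw [← inner_self_eq_norm_sq (𝕜 := ℂ), ← inner_self_eq_norm_sq (𝕜 := ℂ), h1]
    have := h2
    nlinarith [norm_nonneg (adjoint A z), norm_nonneg (A z)]
  set t := ‖(inner ℂ (A x) y : ℂ)‖ with ht
  have ht0 : 0 ≤ t := norm_nonneg _
  have ha : t ≤ ‖A x‖ * ‖y‖ := norm_inner_le_norm _ _
  have hb : t ≤ ‖A y‖ * ‖x‖ := by
    have : (inner ℂ (A x) y : ℂ) = inner ℂ x (adjoint A y) := (adjoint_inner_right A x y).symm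
    calc t = ‖(inner ℂ x (adjoint A y) : ℂ)‖ := by rw [ht, this]
      _ ≤ ‖x‖ * ‖adjoint A y‖ := norm_inner_le_norm _ _
      _ = ‖A y‖ * ‖x‖ := by rw [hadj]; ring
  have key : t = t ^ lam * t ^ (1 - lam) := by
    rw [← Real.rpow_add' ht0 (by norm_num), add_sub_cancel, Real.rpow_one]
  rw [key]
  exact mul_le_mul (Real.rpow_le_rpow ht0 ha hl0.le)
    (Real.rpow_le_rpow ht0 hb (by linarith)) (Real.rpow_nonneg ht0 _)
    (Real.rpow_nonneg (le_trans ht0 ha) _)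
end

section
/- If a bounded operator A on a complex Hilbert space satisfies the generalized Cauchy–Schwarz inequality for some λ ∈ (0,1), then it also satisfies it for every λ' ∈ (λ, 1). -/
open ContinuousLinearMap Set

/-- `A` satisfies the generalized Cauchy–Schwarz inequality with exponent `lam`. -/
def GCSI {H : Type*} [NormedAddCommGroup H] [InnerProductSpace ℂ H]
    (A : H →L[ℂ] H) (lam : ℝ) : Prop :=
  ∀ x y : H, ‖(inner ℂ (A x) y : ℂ)‖ ≤ (‖A x‖ * ‖y‖) ^ lam * (‖A y‖ * ‖x‖) ^ (1 - lam)

theorem gcsi_mono {H : Type*} [NormedAddCommGroup H] [InnerProductSpace ℂ H]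
    (A : H →L[ℂ] H) (lam : ℝ) (hlam : lam ∈ Set.Ioo (0 : ℝ) 1)
    (hA : GCSI A lam) : ∀ lam' ∈ Set.Ioo lam 1, GCSI A lam' := by
  rintro lam' ⟨hll, hl1'⟩ x y
  obtain ⟨hl0, hl1⟩ := hlam
  set a := ‖A x‖ * ‖y‖ with ha
  set b := ‖A y‖ * ‖x‖ with hb
  set c := ‖(inner ℂ (A x) y : ℂ)‖ with hc
  have ha0 : 0 ≤ a := mul_nonneg (norm_nonneg _) (norm_nonneg _)
  have hb0 : 0 ≤ b := mul_nonneg (norm_nonneg _) (norm_nonneg _)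
  have hc0 : 0 ≤ c := norm_nonneg _
  have hCS : c ≤ a := norm_inner_le_norm _ _
  have hG : c ≤ a ^ lam * b ^ (1 - lam) := hA x y
  rcases eq_or_lt_of_le hc0 with hcz | hcp
  · rw [← hcz]
    positivity
  · have hapos : 0 < a := lt_of_lt_of_le hcp hCS
    have hbpos : 0 < b := by
      by_contra hbn
      push_neg at hbn
      have hb0' : b = 0 := le_antisymm hbn hb0
      rw [hb0', Real.zero_rpow (by linarith)] at hG
      simp at hG
      linarith
    set t := (1 - lam') / (1 - lam) with ht
    have htpos : 0 < t := div_pos (by linarith) (by linarith)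
    have ht1 : t ≤ 1 := by
      rw [div_le_one (by linarith)]; linarith
    have key : t * (1 - lam) = 1 - lam' := by
      rw [ht, div_mul_cancel₀ _ (by linarith : (1:ℝ) - lam ≠ 0)]
    have hceq : c = c ^ t * c ^ (1 - t) := by
      rw [← Real.rpow_add hcp, show t + (1 - t) = 1 by ring, Real.rpow_one]
    have h3 : c ^ t ≤ (a ^ lam * b ^ (1 - lam)) ^ t :=
      Real.rpow_le_rpow hc0 hG htpos.le
    have h4 : c ^ (1 - t) ≤ a ^ (1 - t) :=
      Real.rpow_le_rpow hc0 hCS (by linarith)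
    have hrhs : (a ^ lam * b ^ (1 - lam)) ^ t * a ^ (1 - t) = a ^ lam' * b ^ (1 - lam') := by
      rw [Real.mul_rpow (Real.rpow_nonneg ha0 _) (Real.rpow_nonneg hb0 _),
        ← Real.rpow_mul ha0, ← Real.rpow_mul hb0]
      have e1 : lam * t + (1 - t) = lam' := by nlinarith [key]
      have e2 : (1 - lam) * t = 1 - lam' := by linarith [key]
      rw [mul_right_comm, ← Real.rpow_add hapos, e1, e2]
    calc c = c ^ t * c ^ (1 - t) := hceq
      _ ≤ (a ^ lam * b ^ (1 - lam)) ^ t * a ^ (1 - t) :=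
          mul_le_mul h3 h4 (Real.rpow_nonneg hc0 _) (by positivity)
      _ = a ^ lam' * b ^ (1 - lam') := hrhs
end

section
/- If a bounded operator A on a complex Hilbert space satisfies the generalized Cauchy–Schwarz inequality for some λ ∈ (0,1), then the kernel of A equals the kernel of A². -/
open ContinuousLinearMap Set

theorem gcsi_ker_sq {H : Type*} [NormedAddCommGroup H] [InnerProductSpace ℂ H]
    [CompleteSpace H] (A : H →L[ℂ] H) (lam : ℝ) (hlam : lam ∈ Set.Ioo (0 : ℝ) 1)
    (hA : GCSI A lam) : LinearMap.ker (A : H →ₗ[ℂ] H) = LinearMap.ker (A ∘L A : H →ₗ[ℂ] H) := by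
  ext z
  simp only [LinearMap.mem_ker, ContinuousLinearMap.coe_coe, ContinuousLinearMap.comp_apply]
  constructor
  · intro h; rw [h]; simp
  · intro h
    have key := hA z (A z)
    rw [h] at key
    have h1 : ‖(inner ℂ (A z) (A z) : ℂ)‖ = ‖A z‖ * ‖A z‖ := by
      rw [@inner_self_eq_norm_sq_to_K ℂ]; simp [sq]
    rw [h1] at key
    have h2 : ((0 : ℝ) * ‖z‖) ^ (1 - lam) = 0 := by
      rw [zero_mul, Real.zero_rpow (by linarith [hlam.2])]
    rw [norm_zero, h2, mul_zero] at key
    have : ‖A z‖ = 0 := by nlinarith [norm_nonneg (A z)]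
    exact norm_eq_zero.mp this
end

section
/- If the adjoint A* of a bounded operator A on a complex Hilbert space satisfies the generalized Cauchy–Schwarz inequality for some λ ∈ (0,1), then the orthogonal complement of the range of A equals the orthogonal complement of the range of A². -/
open ContinuousLinearMap Set

lemma mem_range_orth_iff {H : Type*} [NormedAddCommGroup H] [InnerProductSpace ℂ H]
    [CompleteSpace H] (A : H →L[ℂ] H) (x : H) :
    x ∈ (LinearMap.range (A : H →ₗ[ℂ] H))ᗮ ↔ adjoint A x = 0 := by
  constructor
  · intro hx
    have h : (inner ℂ (adjoint A x) (adjoint A x) : ℂ) = 0 := by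
      rw [adjoint_inner_right]
      exact hx _ ⟨adjoint A x, rfl⟩
    exact inner_self_eq_zero.mp h
  · intro hx u hu
    obtain ⟨v, rfl⟩ := hu
    change inner ℂ (A v) x = 0
    rw [← adjoint_inner_right, hx, inner_zero_right]

theorem gcsi_adjoint_range_orth {H : Type*} [NormedAddCommGroup H] [InnerProductSpace ℂ H]
    [CompleteSpace H] (A : H →L[ℂ] H) (lam : ℝ) (hlam : lam ∈ Set.Ioo (0 : ℝ) 1)
    (hA : GCSI (adjoint A) lam) :
    (LinearMap.range (A : H →ₗ[ℂ] H))ᗮ = (LinearMap.range ((A ∘L A : H →L[ℂ] H) : H →ₗ[ℂ] H))ᗮ := by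
  ext x
  rw [mem_range_orth_iff, mem_range_orth_iff]
  have hcomp : adjoint (A ∘L A) x = adjoint A (adjoint A x) := by
    rw [adjoint_comp]; rfl
  rw [hcomp]
  constructor
  · intro h; rw [h, map_zero]
  · intro h
    set T := adjoint A
    have key := hA x (T x)
    rw [show T (T x) = 0 from h] at key
    simp only [norm_zero, zero_mul] at key
    rw [Real.zero_rpow (by linarith [hlam.2] : 1 - lam ≠ 0), mul_zero] at key
    have : ‖(inner ℂ (T x) (T x) : ℂ)‖ = ‖T x‖ ^ 2 := by
      rw [inner_self_eq_norm_sq_to_K]; simp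
    rw [this] at key
    have : ‖T x‖ = 0 := by nlinarith [norm_nonneg (T x)]
    exact norm_eq_zero.mp this
end

section
/- If a bounded operator A on a complex Hilbert space satisfies the generalized Cauchy–Schwarz inequality for some λ ∈ (0,1), then the kernel of A is contained in the kernel of A*. -/
open ContinuousLinearMap Set

theorem gcsi_ker_subset_ker_adjoint {H : Type*} [NormedAddCommGroup H]
    [InnerProductSpace ℂ H] [CompleteSpace H] (A : H →L[ℂ] H) (lam : ℝ)
    (hlam : lam ∈ Set.Ioo (0 : ℝ) 1) (hA : GCSI A lam) :
    ∀ z : H, A z = 0 → adjoint A z = 0 := by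
  intro z hz
  have key : ∀ y : H, (inner ℂ (A y) z : ℂ) = 0 := by
    intro y
    have h := hA y z
    rw [hz] at h
    simp only [norm_zero, zero_mul] at h
    rw [Real.zero_rpow (by linarith [hlam.2] : 1 - lam ≠ 0), mul_zero] at h
    exact norm_le_zero_iff.mp h
  have h2 : (inner ℂ (adjoint A z) (adjoint A z) : ℂ) = 0 := by
    rw [ContinuousLinearMap.adjoint_inner_right]
    exact key (adjoint A z)
  exact inner_self_eq_zero.mp h2
end

section
/- If a bounded operator A on a complex Hilbert space satisfies the generalized Cauchy–Schwarz inequality for some λ ∈ (0,1), then the range of A intersects the kernel of A only in {0}. -/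
open ContinuousLinearMap Set

theorem gcsi_range_inter_ker {H : Type*} [NormedAddCommGroup H] [InnerProductSpace ℂ H]
    (A : H →L[ℂ] H) (lam : ℝ) (hlam : lam ∈ Set.Ioo (0 : ℝ) 1) (hA : GCSI A lam) :
    ∀ y : H, y ∈ LinearMap.range (A : H →ₗ[ℂ] H) → A y = 0 → y = 0 := by
  rintro y ⟨x, rfl⟩ hker
  change A (A x) = 0 at hker
  have h := hA x (A x)
  rw [hker] at h
  have h0 : ((0 : ℝ) * ‖x‖) ^ (1 - lam) = 0 := by
    rw [zero_mul, Real.zero_rpow (by linarith [hlam.2])]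
  rw [norm_zero, h0, mul_zero] at h
  have hinner : ‖(inner ℂ (A x) (A x) : ℂ)‖ = ‖A x‖ ^ 2 := by
    rw [inner_self_eq_norm_sq_to_K]
    simp [sq_abs]
  rw [hinner] at h
  have : ‖A x‖ = 0 := by nlinarith [norm_nonneg (A x)]
  exact norm_eq_zero.mp this
end

section
/- Let A be a bounded operator on a complex Hilbert space. Suppose there exists x ∈ H with Ax ≠ 0 such that for every y ∈ H the equality |⟨Ax, y⟩| = (‖Ax‖‖y‖)^λ (‖Ay‖‖x‖)^(1−λ) holds for some fixed λ ∈ (0,1). Then ‖Az‖ ≤ ‖A*z‖ for every z ∈ H. -/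
open ContinuousLinearMap Set

theorem gcsi_equality_cohyponormal {H : Type*} [NormedAddCommGroup H]
    [InnerProductSpace ℂ H] [CompleteSpace H] (A : H →L[ℂ] H) (x : H) (hx : A x ≠ 0)
    (lam : ℝ) (hlam : lam ∈ Set.Ioo (0 : ℝ) 1)
    (heq : ∀ y : H,
      ‖(inner ℂ (A x) y : ℂ)‖ = (‖A x‖ * ‖y‖) ^ lam * (‖A y‖ * ‖x‖) ^ (1 - lam)) :
    ∀ z : H, ‖A z‖ ≤ ‖adjoint A z‖ := by
  have hx0 : x ≠ 0 := fun h => hx (by simp [h])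
  have hxpos : (0:ℝ) < ‖x‖ := norm_pos_iff.mpr hx0
  have hAxpos : (0:ℝ) < ‖A x‖ := norm_pos_iff.mpr hx
  -- Step 1: equality in Cauchy–Schwarz at y = x
  have h1 : ‖(inner ℂ (A x) x : ℂ)‖ = ‖A x‖ * ‖x‖ := by
    have h := heq x
    rw [← Real.rpow_add (by positivity)] at h
    simpa using h
  obtain ⟨r, hr, hxr⟩ := (norm_inner_eq_norm_iff hx hx0).mp h1
  -- A x = μ • x
  set μ : ℂ := r⁻¹ with hμ
  have hAx : A x = μ • x := by
    have h2 := congrArg (fun v => μ • v) hxr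
    simp only [hμ, smul_smul, inv_mul_cancel₀ hr, one_smul] at h2
    exact h2.symm
  have hμ0 : μ ≠ 0 := inv_ne_zero hr
  -- Step 2: A kills the orthogonal complement of x
  have hker : ∀ y : H, (inner ℂ x y : ℂ) = 0 → A y = 0 := by
    intro y hy
    rcases eq_or_ne y 0 with rfl | hy0
    · simp
    have hypos : (0:ℝ) < ‖y‖ := norm_pos_iff.mpr hy0
    have hL : (inner ℂ (A x) y : ℂ) = 0 := by rw [hAx, inner_smul_left, hy, mul_zero]
    have h := heq y
    rw [hL] at h
    have h0 : (‖A x‖ * ‖y‖) ^ lam * (‖A y‖ * ‖x‖) ^ (1 - lam) = 0 := by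
      rw [← h]; simp
    have h1' : (‖A x‖ * ‖y‖) ^ lam ≠ 0 := by positivity
    have h2 : (‖A y‖ * ‖x‖) ^ (1 - lam) = 0 := by
      rcases mul_eq_zero.mp h0 with h' | h'
      · exact absurd h' h1'
      · exact h'
    have h3 : ‖A y‖ * ‖x‖ = 0 := by
      by_contra hne
      exact hne (Real.rpow_eq_zero_iff_of_nonneg (by positivity) |>.mp h2).1
    have : ‖A y‖ = 0 := by
      rcases mul_eq_zero.mp h3 with h' | h'
      · exact h'
      · exact absurd h' (ne_of_gt hxpos)
    exact norm_eq_zero.mp this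
  -- Step 3: A z = (c * μ) • x  where c = ⟪x,z⟫ / ‖x‖²
  intro z
  set c : ℂ := (inner ℂ x z : ℂ) / ((‖x‖ : ℂ)^2) with hc
  have hx2 : ((‖x‖ : ℂ)^2) ≠ 0 := by
    exact_mod_cast pow_ne_zero 2 (ne_of_gt hxpos)
  have hw : (inner ℂ x (z - c • x) : ℂ) = 0 := by
    rw [inner_sub_right, inner_smul_right, hc, inner_self_eq_norm_sq_to_K]
    field_simp
    simp [hx0]
  have hAz : A z = (c * μ) • x := by
    have := hker (z - c • x) hw
    rw [map_sub, map_smul, sub_eq_zero] at this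
    rw [this, hAx, smul_smul]
  -- Key norm identity
  have hinner : ‖(inner ℂ z (A x) : ℂ)‖ = ‖A z‖ * ‖x‖ := by
    rw [hAx, inner_smul_right, hAz, norm_smul, norm_mul]
    have hxz : ‖(inner ℂ z x : ℂ)‖ = ‖(inner ℂ x z : ℂ)‖ := norm_inner_symm z x
    have hcx : ‖(inner ℂ x z : ℂ)‖ = ‖c‖ * ‖x‖^2 := by
      rw [hc, norm_div]
      have : ‖((‖x‖ : ℂ)^2)‖ = ‖x‖^2 := by
        simp [norm_pow]
      rw [this]
      field_simp
    rw [norm_mul, hxz, hcx]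
    ring
  -- Finish via Cauchy–Schwarz on the adjoint
  have hcs : ‖(inner ℂ ((adjoint A) z) x : ℂ)‖ ≤ ‖adjoint A z‖ * ‖x‖ :=
    norm_inner_le_norm _ _
  rw [adjoint_inner_left, hinner] at hcs
  exact le_of_mul_le_mul_right hcs hxpos
end

section
/- Let A be a bounded operator on a complex Hilbert space with polar decomposition A = U|A|, where U is a partial isometry with ker U = ker A. If A is semi-hyponormal (i.e. |A*| ≤ |A|), then A satisfies the generalized Cauchy–Schwarz inequality with λ = 1/2: |⟨Ax, y⟩| ≤ (‖Ax‖‖y‖)^{1/2} (‖Ay‖‖x‖)^{1/2} for all x, y ∈ H. -/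
open ContinuousLinearMap Set

set_option synthInstance.maxHeartbeats 1000000
set_option maxHeartbeats 2000000

theorem semihyponormal_gcsi_half {H : Type*} [NormedAddCommGroup H]
    [InnerProductSpace ℂ H] [CompleteSpace H] (A U : H →L[ℂ] H)
    (hpolar : A = U * CFC.sqrt (adjoint A * A))
    (hPI : U * adjoint U * U = U)
    (hker : LinearMap.ker (U : H →ₗ[ℂ] H) = LinearMap.ker (A : H →ₗ[ℂ] H))
    (hUAU : U * CFC.sqrt (adjoint A * A) * adjoint U = CFC.sqrt (A * adjoint A))
    (hsemi : CFC.sqrt (A * adjoint A) ≤ CFC.sqrt (adjoint A * A)) :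
    ∀ x y : H, ‖(inner ℂ (A x) y : ℂ)‖ ≤
      (‖A x‖ * ‖y‖) ^ ((1 : ℝ) / 2) * (‖A y‖ * ‖x‖) ^ ((1 : ℝ) / 2) := by
  intro x y
  set T := CFC.sqrt (adjoint A * A) with hTdef
  set T' := CFC.sqrt (A * adjoint A) with hT'def
  have hAA : (0 : H →L[ℂ] H) ≤ adjoint A * A := by
    simpa [ContinuousLinearMap.star_eq_adjoint] using star_mul_self_nonneg A
  have hT : (0 : H →L[ℂ] H) ≤ T := CFC.sqrt_nonneg _
  have hTsa : IsSelfAdjoint T := ((ContinuousLinearMap.nonneg_iff_isPositive T).mp hT).isSelfAdjoint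
  have hT2 : T * T = adjoint A * A := CFC.sqrt_mul_sqrt_self _ hAA
  set S := CFC.sqrt T with hSdef
  have hSsa : IsSelfAdjoint S :=
    ((ContinuousLinearMap.nonneg_iff_isPositive S).mp (CFC.sqrt_nonneg _)).isSelfAdjoint
  have hS2 : S * S = T := CFC.sqrt_mul_sqrt_self T hT
  -- re ⟪T a, a⟫ = ‖S a‖ ^ 2
  have hre : ∀ a : H, RCLike.re (inner ℂ (T a) a : ℂ) = ‖S a‖ ^ 2 := by
    intro a
    have h1 : T a = S (S a) := by rw [← hS2]; rfl
    have h2 : (inner ℂ (T a) a : ℂ) = inner ℂ (S a) (S a) := by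
      rw [h1]
      calc (inner ℂ (S (S a)) a : ℂ) = inner ℂ (adjoint S (S a)) a := by rw [hSsa.adjoint_eq]
        _ = inner ℂ (S a) (S a) := ContinuousLinearMap.adjoint_inner_left S a (S a)
    rw [h2, inner_self_eq_norm_sq]
  -- ‖A a‖ = ‖T a‖
  have hnorm : ∀ a : H, ‖A a‖ = ‖T a‖ := by
    intro a
    have h1 : (inner ℂ (A a) (A a) : ℂ) = inner ℂ (T a) (T a) := by
      calc (inner ℂ (A a) (A a) : ℂ) = inner ℂ (adjoint A (A a)) a :=
            (ContinuousLinearMap.adjoint_inner_left A a (A a)).symm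
        _ = inner ℂ ((adjoint A * A) a) a := rfl
        _ = inner ℂ ((T * T) a) a := by rw [hT2]
        _ = inner ℂ (adjoint T (T a)) a := by rw [hTsa.adjoint_eq]; rfl
        _ = inner ℂ (T a) (T a) := ContinuousLinearMap.adjoint_inner_left T a (T a)
    have h2 : ‖A a‖ ^ 2 = ‖T a‖ ^ 2 := by
      rw [← inner_self_eq_norm_sq (𝕜 := ℂ), ← inner_self_eq_norm_sq (𝕜 := ℂ), h1]
    have := congrArg Real.sqrt h2
    rwa [Real.sqrt_sq (norm_nonneg _), Real.sqrt_sq (norm_nonneg _)] at this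
  set u := adjoint U y with hu
  -- the inner product identity
  have hc : (inner ℂ (A x) y : ℂ) = inner ℂ (S x) (S u) := by
    have hAx : A x = U (T x) := by rw [hpolar]; rfl
    calc (inner ℂ (A x) y : ℂ) = inner ℂ (U (T x)) y := by rw [hAx]
      _ = inner ℂ (T x) u := (ContinuousLinearMap.adjoint_inner_right U (T x) y).symm
      _ = inner ℂ (S (S x)) u := by rw [← hS2]; rfl
      _ = inner ℂ (adjoint S (S x)) u := by rw [hSsa.adjoint_eq]
      _ = inner ℂ (S x) (S u) := ContinuousLinearMap.adjoint_inner_left S u (S x)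
  -- first factor bound
  have hx1 : ‖S x‖ ^ 2 ≤ ‖A x‖ * ‖x‖ := by
    rw [← hre x]
    calc RCLike.re (inner ℂ (T x) x : ℂ) ≤ ‖(inner ℂ (T x) x : ℂ)‖ := RCLike.re_le_norm _
      _ ≤ ‖T x‖ * ‖x‖ := norm_inner_le_norm _ _
      _ = ‖A x‖ * ‖x‖ := by rw [hnorm x]
  -- second factor bound
  have hy1 : ‖S u‖ ^ 2 ≤ ‖A y‖ * ‖y‖ := by
    rw [← hre u]
    have h3 : (inner ℂ (T u) u : ℂ) = inner ℂ (T' y) y := by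
      calc (inner ℂ (T u) u : ℂ) = inner ℂ (U (T u)) y :=
            ContinuousLinearMap.adjoint_inner_right U (T u) y
        _ = inner ℂ ((U * T * adjoint U) y) y := rfl
        _ = inner ℂ (T' y) y := by rw [hUAU]
    have h4 : RCLike.re (inner ℂ (T' y) y : ℂ) ≤ RCLike.re (inner ℂ (T y) y : ℂ) := by
      have hpos : (T - T').IsPositive := (ContinuousLinearMap.le_def T' T).mp hsemi
      have := hpos.inner_nonneg_left y
      simp only [ContinuousLinearMap.sub_apply, inner_sub_left, map_sub] at this
      have h' := (RCLike.le_iff_re_im.mp this).1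
      simp only [map_sub, map_zero] at h'
      linarith
    calc RCLike.re (inner ℂ (T u) u : ℂ) = RCLike.re (inner ℂ (T' y) y : ℂ) := by rw [h3]
      _ ≤ RCLike.re (inner ℂ (T y) y : ℂ) := h4
      _ ≤ ‖(inner ℂ (T y) y : ℂ)‖ := RCLike.re_le_norm _
      _ ≤ ‖T y‖ * ‖y‖ := norm_inner_le_norm _ _
      _ = ‖A y‖ * ‖y‖ := by rw [hnorm y]
  -- combine
  have hmain : ‖(inner ℂ (A x) y : ℂ)‖ ^ 2 ≤ (‖A x‖ * ‖y‖) * (‖A y‖ * ‖x‖) := by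
    have h5 : ‖(inner ℂ (A x) y : ℂ)‖ ≤ ‖S x‖ * ‖S u‖ := by
      rw [hc]; exact norm_inner_le_norm _ _
    have h6 : ‖(inner ℂ (A x) y : ℂ)‖ ^ 2 ≤ (‖S x‖ * ‖S u‖) ^ 2 := by
      apply pow_le_pow_left₀ (norm_nonneg _) h5
    calc ‖(inner ℂ (A x) y : ℂ)‖ ^ 2 ≤ (‖S x‖ * ‖S u‖) ^ 2 := h6
      _ = ‖S x‖ ^ 2 * ‖S u‖ ^ 2 := by ring
      _ ≤ (‖A x‖ * ‖x‖) * (‖A y‖ * ‖y‖) := by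
          apply mul_le_mul hx1 hy1 (sq_nonneg _)
          positivity
      _ = (‖A x‖ * ‖y‖) * (‖A y‖ * ‖x‖) := by ring
  rw [← Real.sqrt_eq_rpow, ← Real.sqrt_eq_rpow,
    ← Real.sqrt_mul (by positivity : (0:ℝ) ≤ ‖A x‖ * ‖y‖)]
  calc ‖(inner ℂ (A x) y : ℂ)‖ = Real.sqrt (‖(inner ℂ (A x) y : ℂ)‖ ^ 2) :=
        (Real.sqrt_sq (norm_nonneg _)).symm
    _ ≤ Real.sqrt ((‖A x‖ * ‖y‖) * (‖A y‖ * ‖x‖)) := Real.sqrt_le_sqrt hmain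
end

section
/- Let A be a bounded operator on a complex Hilbert space with polar decomposition A = U|A|. If A satisfies the generalized Cauchy–Schwarz inequality for some λ ∈ (0,1), then A is paranormal: ‖Aw‖² ≤ ‖A²w‖‖w‖ for every w ∈ H. -/
open ContinuousLinearMap Set

set_option synthInstance.maxHeartbeats 1000000

theorem gcsi_paranormal {H : Type*} [NormedAddCommGroup H]
    [InnerProductSpace ℂ H] [CompleteSpace H] (A U : H →L[ℂ] H)
    (hpolar : A = U * CFC.sqrt (adjoint A * A))
    (hPI : U * adjoint U * U = U)
    (hkerU : LinearMap.ker (U : H →ₗ[ℂ] H) = LinearMap.ker (A : H →ₗ[ℂ] H))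
    (hkerUstar : LinearMap.ker (adjoint U : H →ₗ[ℂ] H) = LinearMap.ker (adjoint A : H →ₗ[ℂ] H))
    (hpow : ∀ t : ℝ, 0 < t →
      U * CFC.rpow (CFC.sqrt (adjoint A * A)) t * adjoint U =
        CFC.rpow (CFC.sqrt (A * adjoint A)) t)
    (lam : ℝ) (hlam : lam ∈ Set.Ioo (0 : ℝ) 1) (hA : GCSI A lam) :
    ∀ w : H, ‖A w‖ ^ 2 ≤ ‖A (A w)‖ * ‖w‖ := by
  intro w
  obtain ⟨hl0, hl1⟩ := hlam
  have key := hA w (A w)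
  have hinner : ‖(inner ℂ (A w) (A w) : ℂ)‖ = ‖A w‖ ^ 2 := by
    rw [inner_self_eq_norm_sq_to_K]
    simp
  rw [hinner] at key
  set a := ‖A w‖ with ha
  set b := ‖A (A w)‖ * ‖w‖ with hb
  have ha0 : 0 ≤ a := norm_nonneg _
  have hb0 : 0 ≤ b := mul_nonneg (norm_nonneg _) (norm_nonneg _)
  rcases eq_or_lt_of_le ha0 with h | h
  · rw [← h]; simpa using hb0
  · have ha2 : (0:ℝ) < a ^ (2:ℝ) := Real.rpow_pos_of_pos h 2
    have hpos : 0 < (a ^ (2:ℝ)) ^ lam := Real.rpow_pos_of_pos ha2 lam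
    have key' : a ^ (2:ℝ) ≤ (a ^ (2:ℝ)) ^ lam * b ^ (1 - lam) := by
      have haa : a * a = a ^ (2:ℝ) := by rw [Real.rpow_two, sq]
      rw [← haa, Real.rpow_two, sq] at *
      exact key
    have h2 : (a ^ (2:ℝ)) ^ (1 - lam) ≤ b ^ (1 - lam) := by
      rw [Real.rpow_sub ha2, Real.rpow_one, div_le_iff₀ hpos, mul_comm]
      exact key'
    have h3 : a ^ (2:ℝ) ≤ b :=
      (Real.rpow_le_rpow_iff ha2.le hb0 (by linarith)).mp h2
    calc a ^ 2 = a ^ (2:ℝ) := (Real.rpow_two a).symm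
      _ ≤ b := h3
end

section
/- Let A be a bounded operator on a complex Hilbert space with polar decomposition A = U|A|. Then A is semi-hyponormal (|A*| ≤ |A|) if and only if |⟨Ax, y⟩| ≤ ‖|A|^{1/2}x‖ · ‖|A|^{1/2}y‖ for all x, y ∈ H. -/
open ContinuousLinearMap Set

set_option synthInstance.maxHeartbeats 1000000

private lemma aux_le_of_sq_le_mul {a b : ℝ} (ha : 0 ≤ a) (hb : 0 ≤ b)
    (h : a ^ 2 ≤ a * b) : a ≤ b := by
  rcases eq_or_lt_of_le ha with h0 | h0
  · rw [← h0]; exact hb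
  · rw [pow_two] at h
    exact le_of_mul_le_mul_left h h0

set_option maxHeartbeats 1000000 in
theorem semihyponormal_iff_sqrt_ineq {H : Type*} [NormedAddCommGroup H]
    [InnerProductSpace ℂ H] [CompleteSpace H] (A U : H →L[ℂ] H)
    (hpolar : A = U * CFC.sqrt (adjoint A * A))
    (hPI : U * adjoint U * U = U)
    (hker : LinearMap.ker (U : H →ₗ[ℂ] H) = LinearMap.ker (A : H →ₗ[ℂ] H))
    (hpow : ∀ t : ℝ, 0 < t →
      U * CFC.rpow (CFC.sqrt (adjoint A * A)) t * adjoint U =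
        CFC.rpow (CFC.sqrt (A * adjoint A)) t) :
    CFC.sqrt (A * adjoint A) ≤ CFC.sqrt (adjoint A * A) ↔
      ∀ x y : H, ‖(inner ℂ (A x) y : ℂ)‖ ≤
        ‖CFC.sqrt (CFC.sqrt (adjoint A * A)) x‖ *
          ‖CFC.sqrt (CFC.sqrt (adjoint A * A)) y‖ := by
  set T := CFC.sqrt (adjoint A * A) with hTdef
  set R := CFC.sqrt (A * adjoint A) with hRdef
  set S := CFC.sqrt T with hSdef
  have hTnn : (0 : H →L[ℂ] H) ≤ T := CFC.sqrt_nonneg _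
  have hRnn : (0 : H →L[ℂ] H) ≤ R := CFC.sqrt_nonneg _
  have hSnn : (0 : H →L[ℂ] H) ≤ S := CFC.sqrt_nonneg _
  have hSS : S * S = T := CFC.sqrt_mul_sqrt_self T hTnn
  have hSsa : adjoint S = S := by
    rw [← star_eq_adjoint]
    exact ((nonneg_iff_isPositive S).mp hSnn).isSelfAdjoint
  -- U T U* = R
  have hUTU : U * T * adjoint U = R := by
    have h1 := hpow 1 one_pos
    rw [show CFC.rpow T 1 = T ^ (1 : ℝ) from rfl,
      show CFC.rpow R 1 = R ^ (1 : ℝ) from rfl,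
      CFC.rpow_one T hTnn, CFC.rpow_one R hRnn] at h1
    exact h1
  -- the key inner product identity
  have key : ∀ x y : H, (inner ℂ (A x) y : ℂ) = inner ℂ (S x) (S (adjoint U y)) := by
    intro x y
    have hAx : A x = U (S (S x)) := by rw [hpolar, ← hSS]; rfl
    rw [hAx, ← adjoint_inner_right U, ← hSsa, adjoint_inner_left, hSsa]
  have hRre : ∀ y : H, Complex.re (inner ℂ (R y) y : ℂ) = ‖S (adjoint U y)‖ ^ 2 := by
    intro y
    have h0 : R y = U (T (adjoint U y)) := by rw [← hUTU]; rfl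
    have hTapp : T (adjoint U y) = S (S (adjoint U y)) := by rw [← hSS]; rfl
    rw [h0, ← adjoint_inner_right U, hTapp, ← hSsa, adjoint_inner_left, hSsa,
      inner_self_eq_norm_sq_to_K]
    norm_cast
  have hTre : ∀ y : H, Complex.re (inner ℂ (T y) y : ℂ) = ‖S y‖ ^ 2 := by
    intro y
    have hTapp : T y = S (S y) := by rw [← hSS]; rfl
    rw [hTapp, ← hSsa, adjoint_inner_left, hSsa, inner_self_eq_norm_sq_to_K]
    norm_cast
  constructor
  · intro hle x y
    have h1 : ‖(inner ℂ (A x) y : ℂ)‖ ≤ ‖S x‖ * ‖S (adjoint U y)‖ := by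
      rw [key]; exact norm_inner_le_norm _ _
    have h2 : ‖S (adjoint U y)‖ ≤ ‖S y‖ := by
      have hpos := ((le_def R T).mp hle).re_inner_nonneg_left y
      rw [sub_apply, inner_sub_left] at hpos
      simp only [RCLike.re_to_complex, Complex.sub_re] at hpos
      rw [hRre y, hTre y, sub_nonneg] at hpos
      rcases eq_or_lt_of_le (norm_nonneg (S (adjoint U y))) with h0 | h0
      · rw [← h0]; exact norm_nonneg _
      · nlinarith [norm_nonneg (S y)]
    exact h1.trans (mul_le_mul_of_nonneg_left h2 (norm_nonneg _))
  · intro hineq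
    rw [le_def]
    refine ⟨?_, fun y => ?_⟩
    · exact isSelfAdjoint_iff_isSymmetric.mp (((nonneg_iff_isPositive T).mp hTnn).isSelfAdjoint.sub
        ((nonneg_iff_isPositive R).mp hRnn).isSelfAdjoint)
    · have h1 := hineq (adjoint U y) y
      have h2 : (inner ℂ (A (adjoint U y)) y : ℂ) = (‖S (adjoint U y)‖ : ℂ) ^ 2 := by
        rw [key]
        exact inner_self_eq_norm_sq_to_K _
      have h3 : ‖(inner ℂ (A (adjoint U y)) y : ℂ)‖ = ‖S (adjoint U y)‖ ^ 2 := by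
        rw [h2, show ((‖S (adjoint U y)‖ : ℂ) ^ 2)
            = ((‖S (adjoint U y)‖ ^ 2 : ℝ) : ℂ) by push_cast; ring,
          Complex.norm_real]
        exact abs_of_nonneg (sq_nonneg _)
      rw [h3] at h1
      have h4 : ‖S (adjoint U y)‖ ≤ ‖S y‖ :=
        aux_le_of_sq_le_mul (norm_nonneg _) (norm_nonneg _) h1
      show 0 ≤ Complex.re (inner ℂ ((T - R) y) y : ℂ)
      rw [sub_apply, inner_sub_left, Complex.sub_re, hRre y, hTre y, sub_nonneg]
      exact pow_le_pow_left₀ (norm_nonneg _) h4 2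
end

section
/- Let a, b be positive elements of a C*-algebra B such that ‖a^{1/2} c‖ ≤ ‖b^{1/2} c‖ for all positive c ∈ B. Then a ≤ b. -/
open Filter Topology NNReal

theorem le_of_sqrt_mul_norm_le {B : Type*} [CStarAlgebra B] [PartialOrder B]
    [StarOrderedRing B] (a b : B) (ha : 0 ≤ a) (hb : 0 ≤ b)
    (h : ∀ c : B, 0 ≤ c → ‖CFC.sqrt a * c‖ ≤ ‖CFC.sqrt b * c‖) : a ≤ b := by
  have key : ∀ ε : ℝ≥0, 0 < ε → a ≤ b + algebraMap ℝ≥0 B ε := by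
    intro ε hε
    set b' := b + algebraMap ℝ≥0 B ε with hb'def
    have hεpos : (0 : B) ≤ algebraMap ℝ≥0 B ε := (CStarAlgebra.nnnorm_le_iff_of_nonneg 0 ε le_rfl).mp (by simp)
    have hb' : 0 ≤ b' := add_nonneg hb hεpos
    have hbb' : b ≤ b' := le_add_of_nonneg_right hεpos
    have hεu : IsUnit (algebraMap ℝ≥0 B ε) :=
      (isUnit_iff_ne_zero.mpr hε.ne').map (algebraMap ℝ≥0 B)
    have hu : IsUnit b' :=
      CStarAlgebra.isUnit_of_le _ (le_add_of_nonneg_left hb) ⟨hεpos, hεu⟩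
    have hcnn : (0 : B) ≤ b' ^ (-(1 / 2) : ℝ) := CFC.rpow_nonneg
    have hB : ‖CFC.sqrt b * b' ^ (-(1 / 2) : ℝ)‖ ≤ 1 :=
      (le_iff_norm_sqrt_mul_rpow b b' hb ⟨hb', hu⟩).mp hbb'
    exact (le_iff_norm_sqrt_mul_rpow a b' ha ⟨hb', hu⟩).mpr
      ((h _ hcnn).trans hB)
  have tends : Tendsto (fun n : ℕ => b + algebraMap ℝ≥0 B (1 / (n + 1))) atTop (𝓝 b) := by
    have h1 : Tendsto (fun n : ℕ => (1 / (n + 1) : ℝ≥0)) atTop (𝓝 0) := by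
      rw [← NNReal.tendsto_coe]
      simpa using tendsto_one_div_add_atTop_nhds_zero_nat (𝕜 := ℝ)
    have h2 : Tendsto (fun n : ℕ => algebraMap ℝ≥0 B (1 / (n + 1))) atTop (𝓝 0) := by
      have := ((continuous_algebraMap ℝ≥0 B).tendsto 0).comp h1
      simpa [Function.comp_def] using this
    simpa using tendsto_const_nhds.add h2
  refine ge_of_tendsto tends ?_
  exact Eventually.of_forall fun n => key _ (by exact div_pos one_pos (by positivity))
end

section
/- The operator A on ℂ³ given by the matrix with rows (1,0,0), (0,0,1), (0,0,0) does not satisfy the generalized Cauchy–Schwarz inequality for any λ ∈ (0,1); equivalently, there exist vectors x, y ∈ ℂ³ such that |⟨Ax, y⟩| > (‖Ax‖‖y‖)^λ (‖Ay‖‖x‖)^(1−λ) for all λ ∈ (0,1). In fact, ker A ≠ ker A² for this A. -/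
open ContinuousLinearMap Set

/-- The operator on `ℂ³` with matrix rows `(1,0,0)`, `(0,0,1)`, `(0,0,0)` fails the
generalized Cauchy–Schwarz inequality for every `λ ∈ (0,1)`, and indeed
`ker A ≠ ker A²`. -/
theorem example_not_gcsi
    (A : EuclideanSpace ℂ (Fin 3) →L[ℂ] EuclideanSpace ℂ (Fin 3))
    (hA : ∀ v : EuclideanSpace ℂ (Fin 3),
      A v = (WithLp.equiv 2 (Fin 3 → ℂ)).symm ![v 0, v 2, 0]) :
    (∃ x y : EuclideanSpace ℂ (Fin 3), ∀ lam ∈ Set.Ioo (0 : ℝ) 1,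
      (‖A x‖ * ‖y‖) ^ lam * (‖A y‖ * ‖x‖) ^ (1 - lam) < ‖(inner ℂ (A x) y : ℂ)‖) ∧
    LinearMap.ker (A : EuclideanSpace ℂ (Fin 3) →ₗ[ℂ] EuclideanSpace ℂ (Fin 3)) ≠
      LinearMap.ker ((A ∘L A : EuclideanSpace ℂ (Fin 3) →L[ℂ] EuclideanSpace ℂ (Fin 3)) :
        EuclideanSpace ℂ (Fin 3) →ₗ[ℂ] EuclideanSpace ℂ (Fin 3)) := by
  set x : EuclideanSpace ℂ (Fin 3) := (WithLp.equiv 2 (Fin 3 → ℂ)).symm ![0, 0, 1] with hx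
  set y : EuclideanSpace ℂ (Fin 3) := (WithLp.equiv 2 (Fin 3 → ℂ)).symm ![0, 1, 0] with hy
  have hAx : A x = (WithLp.equiv 2 (Fin 3 → ℂ)).symm ![0, 1, 0] := by
    rw [hA]; congr 1
  have hAy : A y = 0 := by
    rw [hA]
    ext i
    fin_cases i <;> simp [hy]
  have hinner : (inner ℂ (A x) y : ℂ) = 1 := by
    rw [hAx]
    simp [PiLp.inner_apply, Fin.sum_univ_three, hy, EuclideanSpace.norm_eq]
  constructor
  · refine ⟨x, y, fun lam hlam => ?_⟩
    rw [hinner, hAy]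
    simp only [norm_zero, zero_mul]
    rw [Real.zero_rpow (by linarith [hlam.2] : (1:ℝ) - lam ≠ 0)]
    norm_num
  · intro h
    have hx2 : x ∈ LinearMap.ker ((A ∘L A : EuclideanSpace ℂ (Fin 3) →L[ℂ] EuclideanSpace ℂ (Fin 3)) :
        EuclideanSpace ℂ (Fin 3) →ₗ[ℂ] EuclideanSpace ℂ (Fin 3)) := by
      simp [LinearMap.mem_ker, hA, hx]
    rw [← h] at hx2
    rw [LinearMap.mem_ker] at hx2
    rw [ContinuousLinearMap.coe_coe, hAx] at hx2
    have := congrFun (congrArg (WithLp.equiv 2 (Fin 3 → ℂ)) hx2) 1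
    simp at this
end
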